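/- arXiv:1108.5358 — 2 statements merged into one kernel-verified Lean document; each statement's English description precedes it below -/
import Mathlib

section
/- (Homotopy invariance of the Wilson line of a flat connection.) Let a, b : ℝ × ℝ → Matrix (Fin m) (Fin m) ℝ be continuously differentiable and satisfy the zero-curvature equation ∂_s a(t,s) − ∂_t b(t,s) = b(t,s)·a(t,s) − a(t,s)·b(t,s) for all (t,s), together with the fixed-endpoint condition b(0,s) = b(1,s) = 0 for all s. Let U : ℝ × ℝ → Matrix (Fin m) (Fin m) ℝ be twice continuously differentiable with ∂_t U(t,s) = a(t,s)·U(t,s) and U(0,s) = 1 for all s. Then ∂_s U(t,s) = b(t,s)·U(t,s) for all (t,s); in particular ∂_s U(1,s) = 0, so the Wilson line U(1,s) is independent of s: U(1,s) = U(1,0) for all s. -/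
attribute [local instance] Matrix.normedAddCommGroup Matrix.normedSpace

section

abbrev matTopo (m : ℕ) : TopologicalSpace (Matrix (Fin m) (Fin m) ℝ) :=
  (Matrix.normedAddCommGroup : NormedAddCommGroup (Matrix (Fin m) (Fin m) ℝ)).toUniformSpace.toTopologicalSpace

attribute [local instance] matTopo

noncomputable def mulL (m : ℕ) :
    Matrix (Fin m) (Fin m) ℝ →L[ℝ] Matrix (Fin m) (Fin m) ℝ →L[ℝ] Matrix (Fin m) (Fin m) ℝ :=
  LinearMap.toContinuousLinearMap
    ((LinearMap.toContinuousLinearMap :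
        (Matrix (Fin m) (Fin m) ℝ →ₗ[ℝ] Matrix (Fin m) (Fin m) ℝ) ≃ₗ[ℝ]
        (Matrix (Fin m) (Fin m) ℝ →L[ℝ] Matrix (Fin m) (Fin m) ℝ)).toLinearMap.comp
      (LinearMap.mul ℝ (Matrix (Fin m) (Fin m) ℝ)))

@[simp] lemma mulL_apply (m : ℕ) (A B : Matrix (Fin m) (Fin m) ℝ) : mulL m A B = A * B := rfl

lemma HasDerivAt.matMul {m : ℕ} {f g : ℝ → Matrix (Fin m) (Fin m) ℝ}
    {f' g' : Matrix (Fin m) (Fin m) ℝ} {x : ℝ}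
    (hf : HasDerivAt f f' x) (hg : HasDerivAt g g' x) :
    HasDerivAt (fun y => f y * g y) (f' * g x + f x * g') x := by
  have h1 : HasDerivAt (fun y => mulL m (f y)) (mulL m f') x :=
    (mulL m).hasFDerivAt.comp_hasDerivAt x hf
  simpa using h1.clm_apply hg

lemma norm_matMul_le {m : ℕ} (A B : Matrix (Fin m) (Fin m) ℝ) :
    ‖A * B‖ ≤ ‖mulL m‖ * ‖A‖ * ‖B‖ := by
  calc ‖A * B‖ = ‖mulL m A B‖ := by rw [mulL_apply]
    _ ≤ ‖mulL m A‖ * ‖B‖ := (mulL m A).le_opNorm B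
    _ ≤ ‖mulL m‖ * ‖A‖ * ‖B‖ :=
        mul_le_mul_of_nonneg_right ((mulL m).le_opNorm A) (norm_nonneg B)

end

/-- **Homotopy invariance of the Wilson line of a flat connection.**
`a(t,s)` and `b(t,s)` are the two components of the pullback of a flat matrix
connection along a homotopy of paths with fixed endpoints: they satisfy the
zero-curvature equation `∂ₛa − ∂ₜb = b·a − a·b` and `b` vanishes at `t = 0, 1`.
If `U(·,s)` is the parallel transport, `∂ₜU = a·U`, `U(0,s) = 1`, then
`∂ₛU = b·U`; in particular `∂ₛU(1,s) = 0`, so the Wilson line `U(1,s)` is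
independent of `s`. -/
theorem statement8 (m : ℕ)
    (a b U : ℝ × ℝ → Matrix (Fin m) (Fin m) ℝ)
    (ha : ContDiff ℝ 1 a) (hb : ContDiff ℝ 1 b)
    (hflat : ∀ t s : ℝ,
      deriv (fun s' => a (t, s')) s - deriv (fun t' => b (t', s)) t
        = b (t, s) * a (t, s) - a (t, s) * b (t, s))
    (hend0 : ∀ s : ℝ, b (0, s) = 0) (hend1 : ∀ s : ℝ, b (1, s) = 0)
    (hUsmooth : ContDiff ℝ 2 U)
    (hUode : ∀ t s : ℝ, HasDerivAt (fun t' => U (t', s)) (a (t, s) * U (t, s)) t)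
    (hUinit : ∀ s : ℝ, U (0, s) = 1) :
    (∀ t s : ℝ, HasDerivAt (fun s' => U (t, s')) (b (t, s) * U (t, s)) s)
    ∧ (∀ s : ℝ, deriv (fun s' => U (1, s')) s = 0)
    ∧ (∀ s : ℝ, U (1, s) = U (1, 0)) := by
  letI : TopologicalSpace (Matrix (Fin m) (Fin m) ℝ) := matTopo m
  have haDiff : Differentiable ℝ a := ha.differentiable one_ne_zero
  have hbDiff : Differentiable ℝ b := hb.differentiable one_ne_zero
  have hUdiff : Differentiable ℝ U := hUsmooth.differentiable two_ne_zero
  set F := fderiv ℝ U with hFdef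
  have hFc1 : ContDiff ℝ 1 F := hUsmooth.fderiv_right (m := 1) (by norm_num)
  have hFdiff : Differentiable ℝ F := hFc1.differentiable one_ne_zero
  have lineS : ∀ t s : ℝ, HasDerivAt (fun s' => ((t, s') : ℝ × ℝ)) (0, 1) s :=
    fun t s => (hasDerivAt_const s t).prodMk (hasDerivAt_id s)
  have lineT : ∀ t s : ℝ, HasDerivAt (fun t' => ((t', s) : ℝ × ℝ)) (1, 0) t :=
    fun t s => (hasDerivAt_id t).prodMk (hasDerivAt_const t s)
  set V : ℝ × ℝ → Matrix (Fin m) (Fin m) ℝ := fun p => F p (0, 1) with hVdef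
  have keyA : ∀ t s : ℝ, HasDerivAt (fun s' => U (t, s')) (V (t, s)) s :=
    fun t s => (hUdiff (t, s)).hasFDerivAt.comp_hasDerivAt s (lineS t s)
  have keyB : ∀ t s : ℝ, F (t, s) (1, 0) = a (t, s) * U (t, s) :=
    fun t s => ((hUdiff (t, s)).hasFDerivAt.comp_hasDerivAt t (lineT t s)).unique (hUode t s)
  have ha_s : ∀ t s : ℝ, HasDerivAt (fun s' => a (t, s')) (deriv (fun s' => a (t, s')) s) s :=
    fun t s => (((haDiff (t, s)).hasFDerivAt.comp_hasDerivAt s (lineS t s)).differentiableAt).hasDerivAt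
  have hb_t : ∀ t s : ℝ, HasDerivAt (fun t' => b (t', s)) (deriv (fun t' => b (t', s)) t) t :=
    fun t s => (((hbDiff (t, s)).hasFDerivAt.comp_hasDerivAt t (lineT t s)).differentiableAt).hasDerivAt
  -- t-derivative of V, via symmetry of second derivative
  have hVt : ∀ t s : ℝ, HasDerivAt (fun t' => V (t', s))
      (deriv (fun s' => a (t, s')) s * U (t, s) + a (t, s) * V (t, s)) t := by
    intro t s
    have h1 : HasDerivAt (fun t' => F (t', s)) (fderiv ℝ F (t, s) (1, 0)) t :=
      (hFdiff (t, s)).hasFDerivAt.comp_hasDerivAt t (lineT t s)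
    have h2 : HasDerivAt (fun t' => V (t', s)) (fderiv ℝ F (t, s) (1, 0) (0, 1)) t := by
      simpa using h1.clm_apply (hasDerivAt_const t (((0 : ℝ), (1 : ℝ))))
    have hsymm : fderiv ℝ F (t, s) (1, 0) (0, 1) = fderiv ℝ F (t, s) (0, 1) (1, 0) :=
      second_derivative_symmetric (fun y => (hUdiff y).hasFDerivAt)
        ((hFdiff (t, s)).hasFDerivAt) _ _
    have h3 : HasDerivAt (fun s' => F (t, s') (1, 0)) (fderiv ℝ F (t, s) (0, 1) (1, 0)) s := by
      have h1' : HasDerivAt (fun s' => F (t, s')) (fderiv ℝ F (t, s) (0, 1)) s :=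
        (hFdiff (t, s)).hasFDerivAt.comp_hasDerivAt s (lineS t s)
      simpa using h1'.clm_apply (hasDerivAt_const s (((1 : ℝ), (0 : ℝ))))
    have h4 : HasDerivAt (fun s' => a (t, s') * U (t, s'))
        (deriv (fun s' => a (t, s')) s * U (t, s) + a (t, s) * V (t, s)) s :=
      (ha_s t s).matMul (keyA t s)
    rw [show (fun s' => F (t, s') ((1 : ℝ), (0 : ℝ)))
        = fun s' => a (t, s') * U (t, s') from funext fun s' => keyB t s'] at h3
    rw [hsymm, h3.unique h4] at h2
    exact h2
  set W : ℝ × ℝ → Matrix (Fin m) (Fin m) ℝ := fun p => V p - b p * U p with hWdef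
  have hWt : ∀ t s : ℝ, HasDerivAt (fun t' => W (t', s)) (a (t, s) * W (t, s)) t := by
    intro t s
    have hbU := (hb_t t s).matMul (hUode t s)
    have h := (hVt t s).sub hbU
    refine h.congr_deriv ?_
    have hda : deriv (fun s' => a (t, s')) s
        = (b (t, s) * a (t, s) - a (t, s) * b (t, s)) + deriv (fun t' => b (t', s)) t :=
      sub_eq_iff_eq_add.mp (hflat t s)
    simp only [hWdef, hda]
    noncomm_ring
  have hW0 : ∀ s : ℝ, W (0, s) = 0 := by
    intro s
    have h2 := keyA 0 s
    rw [show (fun s' => U (0, s')) = fun _ => (1 : Matrix (Fin m) (Fin m) ℝ)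
        from funext hUinit] at h2
    have hV0 : V (0, s) = 0 := h2.unique (hasDerivAt_const s 1)
    simp [hWdef, hV0, hend0 s]
  -- W vanishes identically, by uniqueness of ODE solutions
  have hWzero : ∀ t s : ℝ, W (t, s) = 0 := by
    intro t s
    set T : ℝ := |t| + 1 with hTdef
    have hT : 0 < T := by positivity
    have hcont : Continuous fun x : ℝ => a (x, s) :=
      haDiff.continuous.comp (continuous_id.prodMk continuous_const)
    obtain ⟨C, hC⟩ := (isCompact_Icc (a := -T) (b := T)).exists_bound_of_continuousOn
      hcont.continuousOn
    have hC0 : 0 ≤ C := le_trans (norm_nonneg _) (hC 0 ⟨by linarith, by linarith⟩)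
    set clamp : ℝ → ℝ := fun x => max (-T) (min x T) with hclampdef
    have hclampmem : ∀ x, clamp x ∈ Set.Icc (-T) T := fun x =>
      ⟨le_max_left _ _, max_le (by linarith) (min_le_right _ _)⟩
    have hclampid : ∀ x ∈ Set.Ioo (-T) T, clamp x = x := by
      intro x hx
      simp only [hclampdef]
      rw [min_eq_left hx.2.le, max_eq_right hx.1.le]
    set v : ℝ → Matrix (Fin m) (Fin m) ℝ → Matrix (Fin m) (Fin m) ℝ :=
      fun x y => a (clamp x, s) * y with hvdef
    set K : NNReal := Real.toNNReal (‖mulL m‖ * C) with hKdef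
    have hv : ∀ x, LipschitzOnWith K (v x) Set.univ := by
      intro x
      apply LipschitzWith.lipschitzOnWith
      apply LipschitzWith.of_dist_le_mul
      intro y z
      simp only [hvdef, dist_eq_norm, ← mul_sub]
      calc ‖a (clamp x, s) * (y - z)‖ ≤ ‖mulL m‖ * ‖a (clamp x, s)‖ * ‖y - z‖ :=
            norm_matMul_le _ _
        _ ≤ (K : ℝ) * ‖y - z‖ := by
            apply mul_le_mul_of_nonneg_right _ (norm_nonneg _)
            rw [hKdef, Real.coe_toNNReal _ (by positivity)]
            exact mul_le_mul_of_nonneg_left (hC _ (hclampmem x)) (norm_nonneg (mulL m))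
    have hWcont : ContinuousOn (fun x => W (x, s)) (Set.Icc (-T) T) :=
      Continuous.continuousOn (by
        rw [continuous_iff_continuousAt]
        exact fun x => (hWt x s).differentiableAt.continuousAt)
    have heq := ODE_solution_unique_of_mem_Icc (v := v) (s := fun _ => Set.univ) (fun x _ => hv x)
      (t₀ := 0) (f := fun x => W (x, s)) (g := fun _ => 0)
      ⟨by linarith, by linarith⟩ hWcont
      (fun x hx => by
        have := hWt x s
        rwa [show a (x, s) = a (clamp x, s) by rw [hclampid x hx]] at this)
      (fun _ _ => Set.mem_univ _) continuousOn_const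
      (fun x hx => by simpa [hvdef] using hasDerivAt_const x (0 : Matrix (Fin m) (Fin m) ℝ))
      (fun _ _ => Set.mem_univ _) (by simpa using hW0 s)
    exact heq ⟨neg_le_of_abs_le (by linarith [le_abs_self t, abs_nonneg t, neg_abs_le t]),
      le_trans (le_abs_self t) (by linarith)⟩
  have hVeq : ∀ t s : ℝ, V (t, s) = b (t, s) * U (t, s) := by
    intro t s
    have := hWzero t s
    simpa [hWdef, sub_eq_zero] using this
  have part1 : ∀ t s : ℝ, HasDerivAt (fun s' => U (t, s')) (b (t, s) * U (t, s)) s := by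
    intro t s
    have := keyA t s
    rwa [hVeq t s] at this
  have part2 : ∀ s : ℝ, deriv (fun s' => U (1, s')) s = 0 := by
    intro s
    rw [(part1 1 s).deriv, hend1 s, zero_mul]
  refine ⟨part1, part2, fun s => ?_⟩
  exact is_const_of_deriv_eq_zero (fun x => ((part1 1 x).differentiableAt)) part2 s 0
end

section
/- (The Wilson loop is closed under the BRST differential.) Let R be a (not necessarily commutative) ring, I a finite type, d : I → ℤ a degree function, and δ : R → R an additive map. Let U, T : I → I → R satisfy: (i) for all α, β ∈ I, δ(U α β) = −Σ_{γ∈I} (T α γ)·(U γ β) + Σ_{γ∈I} (−1)^{d α + d γ} (U α γ)·(T γ β); and (ii) for all α, γ ∈ I, (T γ α)·(U α γ) = (U α γ)·(T γ α). Then the supertrace of U is δ-closed: δ( Σ_{α∈I} (−1)^{d α} U α α ) = 0. -/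
/-- **The Wilson loop is closed under the BRST differential.**
`U α β` are the components of the Wilson line of a super-loop, `T` is the
normalized representation matrix, `δ` the BRST differential and `d α` the fibre
level of the coordinate indexed by `α`.  Given the computed BRST variation of the
Wilson line (i) and the graded-commutation relation (ii), the supertrace of `U`
(the Wilson loop) is `δ`-closed. -/
theorem statement12 (R : Type*) [Ring R] (I : Type*) [Fintype I]
    (d : I → ℤ) (δ : R → R)
    (hδ : ∀ x y : R, δ (x + y) = δ x + δ y)
    (U T : I → I → R)
    (h1 : ∀ α β : I, δ (U α β) =
      -∑ γ : I, T α γ * U γ β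
        + ∑ γ : I, (((-1 : ℤˣ) ^ (d α + d γ) : ℤˣ) : ℤ) • (U α γ * T γ β))
    (h2 : ∀ α γ : I, T γ α * U α γ = U α γ * T γ α) :
    δ (∑ α : I, (((-1 : ℤˣ) ^ (d α) : ℤˣ) : ℤ) • U α α) = 0 := by
  set f : R →+ R := AddMonoidHom.mk' δ hδ with hf
  have hδf : ∀ x, δ x = f x := fun x => rfl
  rw [hδf, map_sum]
  have key : ∀ α : I, f ((((-1 : ℤˣ) ^ (d α) : ℤˣ) : ℤ) • U α α)
      = (((-1 : ℤˣ) ^ (d α) : ℤˣ) : ℤ) • δ (U α α) := fun α => map_zsmul f _ _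
  simp only [key, h1, smul_add, Finset.smul_sum, Finset.sum_add_distrib]
  rw [Finset.sum_comm (γ := I) (s := Finset.univ) (t := Finset.univ)
    (f := fun α γ => (((-1 : ℤˣ) ^ (d α) : ℤˣ) : ℤ) •
      ((((-1 : ℤˣ) ^ (d α + d γ) : ℤˣ) : ℤ) • (U α γ * T γ α)))]
  have : ∀ γ α : I, (((-1 : ℤˣ) ^ (d α) : ℤˣ) : ℤ) •
      ((((-1 : ℤˣ) ^ (d α + d γ) : ℤˣ) : ℤ) • (U α γ * T γ α))
      = (((-1 : ℤˣ) ^ (d γ) : ℤˣ) : ℤ) • (T γ α * U α γ) := by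
    intro γ α
    rw [h2, smul_smul]
    congr 1
    have hu : ((-1 : ℤˣ) ^ (d α)) * ((-1 : ℤˣ) ^ (d α + d γ)) = (-1 : ℤˣ) ^ (d γ) := by
      rw [← zpow_add]
      have he : d α + (d α + d γ) = 2 * d α + d γ := by ring
      rw [he, zpow_add, zpow_mul]
      norm_num
    rw [← Units.val_mul, hu]
  simp only [this]
  simp [smul_neg, Finset.smul_sum, add_comm]
end
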